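/- Every continuous tangent vector field on the 2-sphere S² has a zero (Hairy Ball Theorem). -/

import Mathlib

open Metric Set Pointwise

local notation "E3" => EuclideanSpace ℝ (Fin 3)
local notation "⟪" x ", " y "⟫" => inner (𝕜 := ℝ) x y

noncomputable section HairyBallProof


/-- Subalgebra of continuous functions on the sphere that extend to smooth functions on `E3`. -/
def smoothRestrict : Subalgebra ℝ C(sphere (0:E3) 1, ℝ) where
  carrier := {f | ∃ g : E3 → ℝ, ContDiff ℝ ⊤ g ∧ ∀ x : sphere (0:E3) 1, f x = g x}
  mul_mem' := by
    rintro f₁ f₂ ⟨g₁, hg₁, he₁⟩ ⟨g₂, hg₂, he₂⟩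
    exact ⟨g₁ * g₂, hg₁.mul hg₂, fun x => by simp [he₁ x, he₂ x]⟩
  add_mem' := by
    rintro f₁ f₂ ⟨g₁, hg₁, he₁⟩ ⟨g₂, hg₂, he₂⟩
    exact ⟨g₁ + g₂, hg₁.add hg₂, fun x => by simp [he₁ x, he₂ x]⟩
  algebraMap_mem' := fun c => ⟨fun _ => c, contDiff_const, fun _ => rfl⟩

theorem smoothRestrict_separates : (smoothRestrict).SeparatesPoints := by
  rintro x y hxy
  have : (x : E3) ≠ y := Subtype.coe_ne_coe.mpr hxy
  have : ∃ i, (x : E3) i ≠ (y : E3) i := by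
    by_contra h
    push_neg at h
    exact this (PiLp.ext h)
  obtain ⟨i, hi⟩ := this
  refine ⟨_, ⟨⟨fun z => (z : E3) i, ((EuclideanSpace.proj i).continuous.comp continuous_subtype_val)⟩, ⟨fun z => z i,
    (EuclideanSpace.proj i : E3 →L[ℝ] ℝ).contDiff, fun _ => rfl⟩, rfl⟩, hi⟩

theorem exists_smooth_approx (v : sphere (0:E3) 1 → E3) (hv : Continuous v)
    {ε : ℝ} (hε : 0 < ε) :
    ∃ g : E3 → E3, ContDiff ℝ ⊤ g ∧ ∀ x : sphere (0:E3) 1, ‖g x - v x‖ < ε := by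
  have hε3 : 0 < ε / 3 := by linarith
  have H : ∀ i : Fin 3, ∃ G : E3 → ℝ, ContDiff ℝ ⊤ G ∧
      ∀ x : sphere (0:E3) 1, |G x - v x i| < ε / 3 := by
    intro i
    obtain ⟨f, hf⟩ := ContinuousMap.exists_mem_subalgebra_near_continuous_of_separatesPoints
      smoothRestrict smoothRestrict_separates (fun x => v x i)
      (by fun_prop) (ε/3) hε3
    obtain ⟨G, hG, hGe⟩ := f.2
    exact ⟨G, hG, fun x => by
      have := hf x
      rw [hGe x] at this
      simpa [Real.norm_eq_abs, abs_sub_comm] using this⟩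
  choose G hG hGe using H
  refine ⟨fun x => ∑ i, G i x • EuclideanSpace.single i (1:ℝ), ?_, ?_⟩
  · exact ContDiff.sum fun i _ => (hG i).smul contDiff_const
  · intro x
    have hvx : (∑ i, G i x • EuclideanSpace.single i (1:ℝ)) - v x
        = ∑ i, (G i x - v x i) • EuclideanSpace.single i (1:ℝ) := by
      ext j
      simp only [Fin.sum_univ_three, PiLp.sub_apply, PiLp.add_apply, PiLp.smul_apply,
        EuclideanSpace.single_apply, smul_eq_mul, sub_smul]
      fin_cases j <;> simp <;> ring
    calc ‖(∑ i, G i x • EuclideanSpace.single i (1:ℝ)) - v x‖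
        = ‖∑ i, (G i x - v x i) • EuclideanSpace.single i (1:ℝ)‖ := by rw [hvx]
      _ ≤ ∑ i, ‖(G i x - v x i) • EuclideanSpace.single i (1:ℝ)‖ := norm_sum_le _ _
      _ < ε := by
          have : ∀ i : Fin 3, ‖(G i x - v x i) • EuclideanSpace.single i (1:ℝ)‖ < ε/3 := by
            intro i
            rw [norm_smul, EuclideanSpace.norm_single]
            simpa [Real.norm_eq_abs] using hGe i x
          calc ∑ i, ‖(G i x - v x i) • EuclideanSpace.single i (1:ℝ)‖
              < ∑ _i : Fin 3, ε/3 := Finset.sum_lt_sum_of_nonempty (by simp) (fun i _ => this i)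
            _ = ε := by simp; ring


/-- normalized quotient estimate -/
theorem normalize_sub_le {δ : ℝ} (hδ : 0 < δ) (a b : E3) (ha : δ ≤ ‖a‖) (hb : δ ≤ ‖b‖) :
    ‖‖a‖⁻¹ • a - ‖b‖⁻¹ • b‖ ≤ (2/δ) * ‖a - b‖ := by
  have ha0 : (0:ℝ) < ‖a‖ := lt_of_lt_of_le hδ ha
  have hb0 : (0:ℝ) < ‖b‖ := lt_of_lt_of_le hδ hb
  have key : ‖a‖⁻¹ • a - ‖b‖⁻¹ • b = ‖a‖⁻¹ • (a - b) + (‖a‖⁻¹ - ‖b‖⁻¹) • b := by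
    rw [smul_sub, sub_smul]; abel
  rw [key]
  have h1 : ‖‖a‖⁻¹ • (a - b)‖ ≤ δ⁻¹ * ‖a - b‖ := by
    rw [norm_smul, Real.norm_eq_abs, abs_of_pos (inv_pos.mpr ha0)]
    gcongr
  have h2 : ‖(‖a‖⁻¹ - ‖b‖⁻¹) • b‖ ≤ δ⁻¹ * ‖a - b‖ := by
    rw [norm_smul, Real.norm_eq_abs]
    have : |‖a‖⁻¹ - ‖b‖⁻¹| = |‖b‖ - ‖a‖| / (‖a‖ * ‖b‖) := by
      rw [eq_div_iff (by positivity), ← abs_of_pos (mul_pos ha0 hb0), ← abs_mul]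
      congr 1
      field_simp
    rw [this]
    have hab : |‖b‖ - ‖a‖| ≤ ‖a - b‖ := by
      rw [abs_sub_comm]
      exact (abs_norm_sub_norm_le a b)
    calc |‖b‖ - ‖a‖| / (‖a‖ * ‖b‖) * ‖b‖ = |‖b‖ - ‖a‖| / ‖a‖ := by field_simp
      _ ≤ ‖a - b‖ / δ := div_le_div₀ (norm_nonneg _) hab hδ ha
      _ = δ⁻¹ * ‖a - b‖ := by rw [div_eq_inv_mul]
  calc ‖‖a‖⁻¹ • (a - b) + (‖a‖⁻¹ - ‖b‖⁻¹) • b‖ ≤ ‖‖a‖⁻¹ • (a - b)‖ + ‖(‖a‖⁻¹ - ‖b‖⁻¹) • b‖ :=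
        norm_add_le _ _
    _ ≤ δ⁻¹ * ‖a - b‖ + δ⁻¹ * ‖a - b‖ := add_le_add h1 h2
    _ = (2/δ) * ‖a - b‖ := by ring

section UHat
variable (w : E3 → E3)

/-- homogeneous extension of the normalized field -/
def uhat (x : E3) : E3 := ‖x‖ • (‖w (‖x‖⁻¹ • x)‖⁻¹ • w (‖x‖⁻¹ • x))

variable {w}

theorem norm_inv_smul_self {x : E3} (hx : x ≠ 0) : ‖(‖x‖⁻¹ • x)‖ = 1 := by
  have h0 : ‖x‖ ≠ 0 := norm_ne_zero_iff.mpr hx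
  rw [norm_smul, Real.norm_eq_abs, abs_of_pos (inv_pos.mpr (norm_pos_iff.mpr hx))]
  field_simp

theorem norm_uhat (hw : ∀ y : E3, ‖y‖ = 1 → w y ≠ 0) {x : E3} (hx : x ≠ 0) :
    ‖uhat w x‖ = ‖x‖ := by
  have h1 := norm_inv_smul_self hx
  have h2 : w (‖x‖⁻¹ • x) ≠ 0 := hw _ h1
  have h3 : ‖w (‖x‖⁻¹ • x)‖ ≠ 0 := norm_ne_zero_iff.mpr h2
  rw [uhat, norm_smul, norm_smul, Real.norm_eq_abs, Real.norm_eq_abs,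
    abs_of_nonneg (norm_nonneg x), abs_of_nonneg (inv_nonneg.mpr (norm_nonneg _))]
  rw [inv_mul_cancel₀ h3, mul_one]

theorem inner_uhat (htan : ∀ y : E3, ‖y‖ = 1 → ⟪w y, y⟫ = 0) {x : E3} (hx : x ≠ 0) :
    ⟪uhat w x, x⟫ = 0 := by
  have h1 := norm_inv_smul_self hx
  have h2 : ⟪w (‖x‖⁻¹ • x), ‖x‖⁻¹ • x⟫ = 0 := htan _ h1
  have h0 : ‖x‖ ≠ 0 := norm_ne_zero_iff.mpr hx
  have hwx : ⟪w (‖x‖⁻¹ • x), x⟫ = 0 := by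
    rw [real_inner_smul_right] at h2
    rcases mul_eq_zero.mp h2 with h | h
    · exact absurd h (inv_ne_zero h0)
    · exact h
  rw [uhat, real_inner_smul_left, real_inner_smul_left, hwx]
  ring

theorem contDiffAt_uhat (hw : ContDiff ℝ ⊤ w) (hw0 : ∀ y : E3, ‖y‖ = 1 → w y ≠ 0)
    {x : E3} (hx : x ≠ 0) : ContDiffAt ℝ ⊤ (uhat w) x := by
  have hnorm : ContDiffAt ℝ ⊤ (fun z : E3 => ‖z‖) x := contDiffAt_norm (𝕜 := ℝ) hx
  have hinv : ContDiffAt ℝ ⊤ (fun z : E3 => ‖z‖⁻¹) x :=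
    hnorm.inv (norm_ne_zero_iff.mpr hx)
  have hproj : ContDiffAt ℝ ⊤ (fun z : E3 => ‖z‖⁻¹ • z) x := hinv.smul contDiffAt_id
  have hwy : ContDiffAt ℝ ⊤ (fun z : E3 => w (‖z‖⁻¹ • z)) x :=
    (hw.contDiffAt).comp x hproj
  have hwy0 : w (‖x‖⁻¹ • x) ≠ 0 := hw0 _ (norm_inv_smul_self hx)
  have hnw : ContDiffAt ℝ ⊤ (fun z : E3 => ‖w (‖z‖⁻¹ • z)‖) x := hwy.norm ℝ hwy0
  have hnwi : ContDiffAt ℝ ⊤ (fun z : E3 => ‖w (‖z‖⁻¹ • z)‖⁻¹) x :=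
    hnw.inv (norm_ne_zero_iff.mpr hwy0)
  exact hnorm.smul (hnwi.smul hwy)

/-- Lipschitz estimate for the normalized field on the unit sphere. -/
theorem exists_lip (hw : ContDiff ℝ ⊤ w) {δ : ℝ} (hδ : 0 < δ)
    (hwδ : ∀ y : E3, ‖y‖ = 1 → δ ≤ ‖w y‖) :
    ∃ L : ℝ, 0 ≤ L ∧ ∀ y z : E3, ‖y‖ = 1 → ‖z‖ = 1 →
      ‖(‖w y‖⁻¹ • w y) - (‖w z‖⁻¹ • w z)‖ ≤ L * ‖y - z‖ := by
  obtain ⟨K, hK0, hK⟩ : ∃ K : ℝ, 0 ≤ K ∧ ∀ x ∈ closedBall (0:E3) 1, ‖fderiv ℝ w x‖ ≤ K := by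
    have hc : ContinuousOn (fun x => ‖fderiv ℝ w x‖) (closedBall (0:E3) 1) :=
      ((hw.continuous_fderiv (by simp)).norm).continuousOn
    obtain ⟨x₀, hx₀, hmax⟩ := (isCompact_closedBall (0:E3) 1).exists_isMaxOn
      ⟨0, by simp⟩ hc
    exact ⟨‖fderiv ℝ w x₀‖, norm_nonneg _, fun x hx => hmax hx⟩
  refine ⟨(2/δ) * K, by positivity, fun y z hy hz => ?_⟩
  have hsub : ‖w y - w z‖ ≤ K * ‖y - z‖ :=
    Convex.norm_image_sub_le_of_norm_fderiv_le
      (fun x _ => (hw.differentiable (by simp)).differentiableAt) hK (convex_closedBall _ _)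
      (by simpa [mem_closedBall, dist_eq_norm] using le_of_eq hz)
      (by simpa [mem_closedBall, dist_eq_norm] using le_of_eq hy)
  calc ‖(‖w y‖⁻¹ • w y) - (‖w z‖⁻¹ • w z)‖ ≤ (2/δ) * ‖w y - w z‖ :=
        normalize_sub_le hδ _ _ (hwδ y hy) (hwδ z hz)
    _ ≤ (2/δ) * (K * ‖y - z‖) := by
        apply mul_le_mul_of_nonneg_left hsub (by positivity)
    _ = (2/δ) * K * ‖y - z‖ := by ring

end UHat

section Flow
variable {w : E3 → E3}

/-- the shell `1 ≤ ‖x‖ ≤ 2` -/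
def shell : Set E3 := {x : E3 | ‖x‖ ∈ Icc (1:ℝ) 2}

theorem isClosed_shell : IsClosed shell := isClosed_Icc.preimage continuous_norm

theorem isCompact_shell : IsCompact shell :=
  (isCompact_closedBall (0:E3) 2).of_isClosed_subset isClosed_shell
    (fun x hx => by simpa [mem_closedBall, dist_eq_norm] using hx.2)

theorem shell_ne_zero {x : E3} (hx : x ∈ shell) : x ≠ 0 := by
  intro h
  rw [h] at hx
  simp only [shell, mem_setOf_eq, norm_zero, mem_Icc] at hx
  exact absurd hx.1 (by norm_num)

theorem measurableSet_shell : MeasurableSet shell := isClosed_shell.measurableSet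

theorem norm_ft (hw0 : ∀ y : E3, ‖y‖ = 1 → w y ≠ 0)
    (htan : ∀ y : E3, ‖y‖ = 1 → ⟪w y, y⟫ = 0) {x : E3} (hx : x ≠ 0) (t : ℝ) :
    ‖x + t • uhat w x‖ = Real.sqrt (1 + t^2) * ‖x‖ := by
  have h1 : ⟪x, t • uhat w x⟫ = 0 := by
    rw [real_inner_smul_right, real_inner_comm, inner_uhat htan hx, mul_zero]
  have h2 : ‖x + t • uhat w x‖^2 = (1 + t^2) * ‖x‖^2 := by
    rw [norm_add_sq_real, h1, norm_smul, norm_uhat hw0 hx, Real.norm_eq_abs,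
      mul_pow, sq_abs]
    ring
  rw [← Real.sqrt_sq (norm_nonneg (x + t • uhat w x)), h2,
    Real.sqrt_mul (by positivity), Real.sqrt_sq (norm_nonneg x)]

theorem injOn_ft (hw0 : ∀ y : E3, ‖y‖ = 1 → w y ≠ 0)
    (htan : ∀ y : E3, ‖y‖ = 1 → ⟪w y, y⟫ = 0) {L : ℝ}
    (hL : ∀ y z : E3, ‖y‖ = 1 → ‖z‖ = 1 →
      ‖(‖w y‖⁻¹ • w y) - (‖w z‖⁻¹ • w z)‖ ≤ L * ‖y - z‖)
    {t : ℝ} (ht0 : 0 ≤ t) (htL : t * L < 1) :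
    Set.InjOn (fun x => x + t • uhat w x) shell := by
  intro x hx y hy heq
  simp only at heq
  have hx0 : x ≠ 0 := shell_ne_zero hx
  have hy0 : y ≠ 0 := shell_ne_zero hy
  have hnorm : ‖x‖ = ‖y‖ := by
    have h1 := norm_ft hw0 htan hx0 t
    have h2 := norm_ft hw0 htan hy0 t
    rw [heq, h2] at h1
    have hs : (0:ℝ) < Real.sqrt (1 + t^2) := Real.sqrt_pos.mpr (by positivity)
    exact mul_left_cancel₀ (ne_of_gt hs) h1.symm
  set r := ‖x‖ with hr
  have hr1 : (1:ℝ) ≤ r := hx.1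
  have hr0 : (0:ℝ) < r := lt_of_lt_of_le one_pos hr1
  have hux : ‖(‖x‖⁻¹ • x)‖ = 1 := norm_inv_smul_self hx0
  have huy : ‖(‖y‖⁻¹ • y)‖ = 1 := norm_inv_smul_self hy0
  have hdiff : x - y = t • (uhat w y - uhat w x) := by
    rw [smul_sub, ← sub_eq_zero]
    have h' : x - y - (t • uhat w y - t • uhat w x)
        = (x + t • uhat w x) - (y + t • uhat w y) := by abel
    rw [h', heq, sub_self]
  have hkey : ‖x - y‖ ≤ t * L * ‖x - y‖ := by
    have e1 : uhat w y - uhat w x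
        = r • ((‖w (‖y‖⁻¹ • y)‖⁻¹ • w (‖y‖⁻¹ • y)) - (‖w (‖x‖⁻¹ • x)‖⁻¹ • w (‖x‖⁻¹ • x))) := by
      rw [uhat, uhat, smul_sub, ← hnorm, ← hr]
    have e2 : ‖(‖y‖⁻¹ • y) - (‖x‖⁻¹ • x)‖ = r⁻¹ * ‖y - x‖ := by
      rw [← hnorm, ← hr, ← smul_sub, norm_smul, Real.norm_eq_abs,
        abs_of_pos (inv_pos.mpr hr0)]
    calc ‖x - y‖ = t * ‖uhat w y - uhat w x‖ := by
          rw [hdiff, norm_smul, Real.norm_eq_abs, abs_of_nonneg ht0]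
      _ = t * (r * ‖(‖w (‖y‖⁻¹ • y)‖⁻¹ • w (‖y‖⁻¹ • y)) - (‖w (‖x‖⁻¹ • x)‖⁻¹ • w (‖x‖⁻¹ • x))‖) := by
          rw [e1, norm_smul, Real.norm_eq_abs, abs_of_pos hr0]
      _ ≤ t * (r * (L * ‖(‖y‖⁻¹ • y) - (‖x‖⁻¹ • x)‖)) := by
          have := hL _ _ huy hux
          gcongr
      _ = t * L * ‖y - x‖ := by
          rw [e2]; field_simp
      _ = t * L * ‖x - y‖ := by rw [norm_sub_rev]
  have : ‖x - y‖ = 0 := by nlinarith [norm_nonneg (x - y)]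
  have := norm_sub_eq_zero_iff.mp this
  exact this

theorem hasStrict_ft (hwsm : ContDiff ℝ ⊤ w) (hw0 : ∀ y : E3, ‖y‖ = 1 → w y ≠ 0)
    {x : E3} (hx : x ≠ 0) (t : ℝ) :
    HasStrictFDerivAt (fun z => z + t • uhat w z)
      ((1 : E3 →L[ℝ] E3) + t • fderiv ℝ (uhat w) x) x := by
  have h := (contDiffAt_uhat hwsm hw0 hx).hasStrictFDerivAt (by simp)
  exact (hasStrictFDerivAt_id x).add (h.const_smul t)

theorem continuousOn_fderiv_uhat (hwsm : ContDiff ℝ ⊤ w)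
    (hw0 : ∀ y : E3, ‖y‖ = 1 → w y ≠ 0) :
    ContinuousOn (fun x => fderiv ℝ (uhat w) x) {x : E3 | x ≠ 0} := by
  have hΩ : IsOpen {x : E3 | x ≠ 0} := isOpen_compl_singleton
  have hcd : ContDiffOn ℝ ⊤ (uhat w) {x : E3 | x ≠ 0} :=
    fun x hx => (contDiffAt_uhat hwsm hw0 hx).contDiffWithinAt
  exact hcd.continuousOn_fderiv_of_isOpen hΩ le_top

theorem exists_fderiv_bound (hwsm : ContDiff ℝ ⊤ w)
    (hw0 : ∀ y : E3, ‖y‖ = 1 → w y ≠ 0) :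
    ∃ M : ℝ, 0 ≤ M ∧ ∀ x ∈ shell, ‖fderiv ℝ (uhat w) x‖ ≤ M := by
  have hc : ContinuousOn (fun x => ‖fderiv ℝ (uhat w) x‖) shell :=
    ((continuousOn_fderiv_uhat hwsm hw0).mono (fun x hx => shell_ne_zero hx)).norm
  obtain ⟨x₀, hx₀, hmax⟩ := isCompact_shell.exists_isMaxOn
    ⟨EuclideanSpace.single 0 (1:ℝ), by simp [shell, EuclideanSpace.norm_single]⟩ hc
  exact ⟨_, norm_nonneg _, fun x hx => hmax hx⟩

end Flow

section Surj
variable {w : E3 → E3}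

theorem one_lt_rank_E3 : (1 : Cardinal) < Module.rank ℝ E3 := by
  rw [← Module.finrank_eq_rank]
  norm_cast
  rw [finrank_euclideanSpace_fin]
  norm_num

theorem sphere_subset_shell {r : ℝ} (hr : r ∈ Icc (1:ℝ) 2) : sphere (0:E3) r ⊆ shell := by
  intro x hx
  rw [mem_sphere_zero_iff_norm] at hx
  exact ⟨by rw [hx]; exact hr.1, by rw [hx]; exact hr.2⟩

theorem continuousOn_ft (hwsm : ContDiff ℝ ⊤ w) (hw0 : ∀ y : E3, ‖y‖ = 1 → w y ≠ 0)
    (t : ℝ) (s : Set E3) (hs : ∀ x ∈ s, x ≠ (0:E3)) :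
    ContinuousOn (fun x => x + t • uhat w x) s := fun x hx =>
  (continuousAt_id.add ((contDiffAt_uhat hwsm hw0 (hs x hx)).continuousAt.const_smul t)).continuousWithinAt

theorem image_ft_sphere (hwsm : ContDiff ℝ ⊤ w) (hw0 : ∀ y : E3, ‖y‖ = 1 → w y ≠ 0)
    (htan : ∀ y : E3, ‖y‖ = 1 → ⟪w y, y⟫ = 0) {M t : ℝ}
    (hM : ∀ x ∈ shell, ‖fderiv ℝ (uhat w) x‖ ≤ M) (ht0 : 0 ≤ t) (htM : t * M < 1)
    {r : ℝ} (hr : r ∈ Icc (1:ℝ) 2) :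
    (fun x => x + t • uhat w x) '' (sphere (0:E3) r)
      = sphere (0:E3) (Real.sqrt (1 + t^2) * r) := by
  set f : E3 → E3 := fun x => x + t • uhat w x with hf
  have hr0 : (0:ℝ) < r := lt_of_lt_of_le one_pos hr.1
  set R := Real.sqrt (1 + t^2) * r with hR
  have hsq : (0:ℝ) < Real.sqrt (1 + t^2) := Real.sqrt_pos.mpr (by positivity)
  have hR0 : (0:ℝ) < R := by positivity
  have hsphere_shell : sphere (0:E3) r ⊆ shell := by
    intro x hx
    rw [mem_sphere_zero_iff_norm] at hx
    exact ⟨by rw [hx]; exact hr.1, by rw [hx]; exact hr.2⟩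
  have hne0 : ∀ x ∈ sphere (0:E3) r, x ≠ 0 := fun x hx => shell_ne_zero (hsphere_shell hx)
  set S := f '' sphere (0:E3) r with hS
  have hsub : S ⊆ sphere (0:E3) R := by
    rintro _ ⟨x, hx, rfl⟩
    rw [mem_sphere_zero_iff_norm, hf, norm_ft hw0 htan (hne0 x hx) t,
      mem_sphere_zero_iff_norm.mp hx]
  have hScomp : IsCompact S :=
    (isCompact_sphere (0:E3) r).image_of_continuousOn
      (continuousOn_ft hwsm hw0 t _ hne0)
  have hSne : S.Nonempty := Set.Nonempty.image _ ((NormedSpace.sphere_nonempty).mpr hr0.le)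
  -- openness of S in the target sphere
  have hopen : ∀ y ∈ S, ∃ U : Set E3, IsOpen U ∧ y ∈ U ∧ U ∩ sphere (0:E3) R ⊆ S := by
    rintro _ ⟨x, hx, rfl⟩
    have hx0 : x ≠ 0 := hne0 x hx
    have hxnorm : ‖x‖ = r := mem_sphere_zero_iff_norm.mp hx
    have hsmall : ‖-(t • fderiv ℝ (uhat w) x)‖ < 1 := by
      rw [norm_neg, norm_smul, Real.norm_eq_abs, abs_of_nonneg ht0]
      calc t * ‖fderiv ℝ (uhat w) x‖ ≤ t * M := by
            have := hM x (hsphere_shell hx)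
            gcongr
        _ < 1 := htM
    set u : (E3 →L[ℝ] E3)ˣ := Units.oneSub _ hsmall with hu
    set e : E3 ≃L[ℝ] E3 := ContinuousLinearEquiv.unitsEquiv ℝ E3 u with he
    have hcoe : (e : E3 →L[ℝ] E3) = (1 : E3 →L[ℝ] E3) + t • fderiv ℝ (uhat w) x := by
      show (u : E3 →L[ℝ] E3) = _
      rw [hu, Units.val_oneSub, sub_neg_eq_add]
    have hsd : HasStrictFDerivAt f (e : E3 →L[ℝ] E3) x := by
      rw [hcoe]; exact hasStrict_ft hwsm hw0 hx0 t
    have hmap : Filter.map f (nhds x) = nhds (f x) := hsd.map_nhds_eq_of_equiv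
    have hball : Metric.ball x r ∈ nhds x := Metric.ball_mem_nhds x hr0
    have himg : f '' Metric.ball x r ∈ nhds (f x) := by
      rw [← hmap, Filter.mem_map]
      exact Filter.mem_of_superset hball (Set.subset_preimage_image f _)
    refine ⟨interior (f '' Metric.ball x r), isOpen_interior,
      mem_interior_iff_mem_nhds.mpr himg, ?_⟩
    rintro z ⟨hz1, hz2⟩
    obtain ⟨x', hx', rfl⟩ := interior_subset hz1
    have hx'0 : x' ≠ 0 := by
      intro h
      rw [h] at hx'
      rw [mem_ball, dist_eq_norm, zero_sub, norm_neg, hxnorm] at hx'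
      exact lt_irrefl r hx'
    have : ‖f x'‖ = R := mem_sphere_zero_iff_norm.mp hz2
    rw [hf, norm_ft hw0 htan hx'0 t] at this
    have hx'norm : ‖x'‖ = r := by
      have := mul_left_cancel₀ (ne_of_gt hsq) this
      exact this
    exact ⟨x', mem_sphere_zero_iff_norm.mpr hx'norm, rfl⟩
  -- connectedness argument
  refine Set.Subset.antisymm hsub ?_
  by_contra hcon
  rw [Set.not_subset] at hcon
  obtain ⟨z₀, hz₀, hz₀S⟩ := hcon
  choose U hUopen hUmem hUsub using hopen
  set Uall : Set E3 := ⋃ (y : E3) (h : y ∈ S), U y h with hUall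
  have hUallopen : IsOpen Uall := isOpen_iUnion fun y => isOpen_iUnion fun h => hUopen y h
  have hSUall : S ⊆ Uall := fun y hy => Set.mem_iUnion.mpr ⟨y, Set.mem_iUnion.mpr ⟨hy, hUmem y hy⟩⟩
  have hUallsub : Uall ∩ sphere (0:E3) R ⊆ S := by
    rintro z ⟨hz1, hz2⟩
    obtain ⟨y, hy⟩ := Set.mem_iUnion.mp hz1
    obtain ⟨hyS, hzU⟩ := Set.mem_iUnion.mp hy
    exact hUsub y hyS ⟨hzU, hz2⟩
  have hconn : IsPreconnected (sphere (0:E3) R) :=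
    (isConnected_sphere one_lt_rank_E3 0 hR0.le).isPreconnected
  have hVopen : IsOpen Sᶜ := hScomp.isClosed.isOpen_compl
  have hcover : sphere (0:E3) R ⊆ Uall ∪ Sᶜ := by
    intro z hz
    by_cases h : z ∈ S
    · exact Or.inl (hSUall h)
    · exact Or.inr h
  obtain ⟨z, hz⟩ := hconn Uall Sᶜ hUallopen hVopen hcover
    ⟨hSne.choose, hsub hSne.choose_spec, hSUall hSne.choose_spec⟩
    ⟨z₀, hz₀, hz₀S⟩
  exact hz.2.2 (hUallsub ⟨hz.2.1, hz.1⟩)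

theorem image_ft_shell (hwsm : ContDiff ℝ ⊤ w) (hw0 : ∀ y : E3, ‖y‖ = 1 → w y ≠ 0)
    (htan : ∀ y : E3, ‖y‖ = 1 → ⟪w y, y⟫ = 0) {M t : ℝ}
    (hM : ∀ x ∈ shell, ‖fderiv ℝ (uhat w) x‖ ≤ M) (ht0 : 0 ≤ t) (htM : t * M < 1) :
    (fun x => x + t • uhat w x) '' shell = Real.sqrt (1 + t^2) • shell := by
  have hsq : (0:ℝ) < Real.sqrt (1 + t^2) := Real.sqrt_pos.mpr (by positivity)
  ext y
  constructor
  · rintro ⟨x, hx, rfl⟩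
    have hx0 : x ≠ 0 := shell_ne_zero hx
    refine Set.mem_smul_set.mpr ⟨(Real.sqrt (1 + t^2))⁻¹ • (x + t • uhat w x), ?_, ?_⟩
    · constructor <;>
      · rw [norm_smul, Real.norm_eq_abs, abs_of_pos (inv_pos.mpr hsq),
          norm_ft hw0 htan hx0 t, inv_mul_cancel_left₀ (ne_of_gt hsq)]
        first | exact hx.1 | exact hx.2
    · rw [smul_inv_smul₀ (ne_of_gt hsq)]
  · intro hy
    obtain ⟨z, hz, rfl⟩ := Set.mem_smul_set.mp hy
    set r := ‖z‖ with hr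
    have hrmem : r ∈ Icc (1:ℝ) 2 := hz
    have : Real.sqrt (1 + t^2) • z ∈ sphere (0:E3) (Real.sqrt (1 + t^2) * r) := by
      rw [mem_sphere_zero_iff_norm, norm_smul, Real.norm_eq_abs, abs_of_pos hsq]
    rw [← image_ft_sphere hwsm hw0 htan hM ht0 htM hrmem] at this
    obtain ⟨x, hx, hxe⟩ := this
    exact ⟨x, sphere_subset_shell hrmem hx, hxe⟩

end Surj

section Det

/-- basis of E3 -/
def bE : Module.Basis (Fin 3) ℝ E3 := (EuclideanSpace.basisFun (Fin 3) ℝ).toBasis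

def matOf (A : E3 →L[ℝ] E3) : Matrix (Fin 3) (Fin 3) ℝ :=
  LinearMap.toMatrix bE bE (A : E3 →ₗ[ℝ] E3)

def q1 (N : Matrix (Fin 3) (Fin 3) ℝ) : ℝ := N 0 0 + N 1 1 + N 2 2

def q2 (N : Matrix (Fin 3) (Fin 3) ℝ) : ℝ :=
  (N 0 0 * N 1 1 - N 0 1 * N 1 0) + (N 0 0 * N 2 2 - N 0 2 * N 2 0)
    + (N 1 1 * N 2 2 - N 1 2 * N 2 1)

theorem det_one_add_smul3 (N : Matrix (Fin 3) (Fin 3) ℝ) (t : ℝ) :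
    (1 + t • N).det = 1 + t * q1 N + t^2 * q2 N + t^3 * N.det := by
  simp [Matrix.det_fin_three, Matrix.add_apply, Matrix.smul_apply, Matrix.one_apply,
    q1, q2, smul_eq_mul]
  ring

theorem clm_det_eq (A : E3 →L[ℝ] E3) (t : ℝ) :
    ((1 : E3 →L[ℝ] E3) + t • A).det = (1 + t • matOf A).det := by
  show LinearMap.det _ = _
  rw [← LinearMap.det_toMatrix bE]
  congr 1
  have : (((1 : E3 →L[ℝ] E3) + t • A : E3 →L[ℝ] E3) : E3 →ₗ[ℝ] E3)
      = (1 : E3 →ₗ[ℝ] E3) + t • (A : E3 →ₗ[ℝ] E3) := by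
    ext z
    simp
  rw [this, map_add, map_smul]
  congr 1
  rw [show (1 : E3 →ₗ[ℝ] E3) = LinearMap.id from rfl, LinearMap.toMatrix_id]

theorem matOf_entry (A : E3 →L[ℝ] E3) (i j : Fin 3) :
    matOf A i j = A (bE j) i := by
  rw [matOf, LinearMap.toMatrix_apply]
  rfl

theorem det_ne_zero_of_small {A : E3 →L[ℝ] E3} {s : ℝ} (h : ‖s • A‖ < 1) :
    ((1 : E3 →L[ℝ] E3) + s • A).det ≠ 0 := by
  have h' : ‖-(s • A)‖ < 1 := by rwa [norm_neg]
  set u : (E3 →L[ℝ] E3)ˣ := Units.oneSub _ h' with hu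
  have hval : (u : E3 →L[ℝ] E3) = 1 + s • A := by
    rw [hu, Units.val_oneSub, sub_neg_eq_add]
  have hmul : ((1 : E3 →L[ℝ] E3) + s • A) * ↑u⁻¹ = 1 := by
    rw [← hval, Units.mul_inv]
  have hdet : ((1 : E3 →L[ℝ] E3) + s • A).det * (↑u⁻¹ : E3 →L[ℝ] E3).det = 1 := by
    show LinearMap.det _ * LinearMap.det _ = 1
    rw [← map_mul]
    rw [show (((1 : E3 →L[ℝ] E3) + s • A : E3 →L[ℝ] E3) : E3 →ₗ[ℝ] E3)
          * ((↑u⁻¹ : E3 →L[ℝ] E3) : E3 →ₗ[ℝ] E3)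
        = ((((1 : E3 →L[ℝ] E3) + s • A) * ↑u⁻¹ : E3 →L[ℝ] E3) : E3 →ₗ[ℝ] E3) from rfl,
      hmul]
    show LinearMap.det (1 : E3 →ₗ[ℝ] E3) = 1
    exact map_one _
  intro h0
  rw [h0, zero_mul] at hdet
  exact zero_ne_one hdet

/-- positivity of the determinant along `[0, t]` when it never vanishes -/
theorem det_pos_of_ne_zero {A : E3 →L[ℝ] E3} {t : ℝ} (ht0 : 0 ≤ t)
    (h : ∀ s ∈ Icc (0:ℝ) t, ((1 : E3 →L[ℝ] E3) + s • A).det ≠ 0) :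
    0 < ((1 : E3 →L[ℝ] E3) + t • A).det := by
  set φ : ℝ → ℝ := fun s => ((1 : E3 →L[ℝ] E3) + s • A).det with hφ
  have hφc : Continuous φ := by
    have : φ = fun s => 1 + s * q1 (matOf A) + s^2 * q2 (matOf A) + s^3 * (matOf A).det := by
      funext s
      rw [hφ]
      simp only
      rw [clm_det_eq, det_one_add_smul3]
    rw [this]
    fun_prop
  have hφ0 : φ 0 = 1 := by
    have h1 : (1 : E3 →L[ℝ] E3) + (0:ℝ) • A = 1 := by ext z; simp
    rw [hφ]
    simp only [h1]
    show LinearMap.det ((1 : E3 →L[ℝ] E3) : E3 →ₗ[ℝ] E3) = 1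
    rw [show (((1 : E3 →L[ℝ] E3)) : E3 →ₗ[ℝ] E3) = 1 from rfl]
    exact map_one _
  by_contra hneg
  push_neg at hneg
  have hne : φ t ≠ 0 := h t ⟨ht0, le_refl t⟩
  have hlt : φ t < 0 := lt_of_le_of_ne hneg hne
  have : (0:ℝ) ∈ Icc (φ t) (φ 0) := ⟨le_of_lt hlt, by rw [hφ0]; norm_num⟩
  have := intermediate_value_Icc' ht0 hφc.continuousOn this
  obtain ⟨s, hs, hs0⟩ := this
  exact h s hs hs0

end Det

section Vol
open MeasureTheory
variable {w : E3 → E3}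

/-- entries of the Jacobian matrix are continuous on the shell -/
theorem contOn_entry (hwsm : ContDiff ℝ ⊤ w) (hw0 : ∀ y : E3, ‖y‖ = 1 → w y ≠ 0) (i j : Fin 3) :
    ContinuousOn (fun x => matOf (fderiv ℝ (uhat w) x) i j) shell := by
  have hAc : ContinuousOn (fun x => fderiv ℝ (uhat w) x) shell :=
    (continuousOn_fderiv_uhat hwsm hw0).mono (fun x hx => shell_ne_zero hx)
  have h1 : ContinuousOn (fun x => fderiv ℝ (uhat w) x (bE j)) shell :=
    hAc.clm_apply continuousOn_const
  have h2 : ContinuousOn (fun x => (fderiv ℝ (uhat w) x (bE j)) i) shell :=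
    (EuclideanSpace.proj i).continuous.comp_continuousOn h1
  have he : (fun x => matOf (fderiv ℝ (uhat w) x) i j)
      = fun x => (fderiv ℝ (uhat w) x (bE j)) i := by
    funext x
    rw [matOf_entry]
  rw [he]
  exact h2

theorem contOn_q1 (hwsm : ContDiff ℝ ⊤ w) (hw0 : ∀ y : E3, ‖y‖ = 1 → w y ≠ 0) :
    ContinuousOn (fun x => q1 (matOf (fderiv ℝ (uhat w) x))) shell := by
  simp only [q1]
  exact ((contOn_entry hwsm hw0 0 0).add (contOn_entry hwsm hw0 1 1)).add
    (contOn_entry hwsm hw0 2 2)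

theorem contOn_q2 (hwsm : ContDiff ℝ ⊤ w) (hw0 : ∀ y : E3, ‖y‖ = 1 → w y ≠ 0) :
    ContinuousOn (fun x => q2 (matOf (fderiv ℝ (uhat w) x))) shell := by
  simp only [q2]
  have e := contOn_entry hwsm hw0
  exact (((e 0 0).mul (e 1 1)).sub ((e 0 1).mul (e 1 0))).add
    ((((e 0 0).mul (e 2 2)).sub ((e 0 2).mul (e 2 0)))) |>.add
    ((((e 1 1).mul (e 2 2)).sub ((e 1 2).mul (e 2 1))))

theorem contOn_q3 (hwsm : ContDiff ℝ ⊤ w) (hw0 : ∀ y : E3, ‖y‖ = 1 → w y ≠ 0) :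
    ContinuousOn (fun x => (matOf (fderiv ℝ (uhat w) x)).det) shell := by
  have : (fun x => (matOf (fderiv ℝ (uhat w) x)).det)
      = fun x =>
        matOf (fderiv ℝ (uhat w) x) 0 0 * matOf (fderiv ℝ (uhat w) x) 1 1
            * matOf (fderiv ℝ (uhat w) x) 2 2
          - matOf (fderiv ℝ (uhat w) x) 0 0 * matOf (fderiv ℝ (uhat w) x) 1 2
            * matOf (fderiv ℝ (uhat w) x) 2 1
          - matOf (fderiv ℝ (uhat w) x) 0 1 * matOf (fderiv ℝ (uhat w) x) 1 0
            * matOf (fderiv ℝ (uhat w) x) 2 2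
          + matOf (fderiv ℝ (uhat w) x) 0 1 * matOf (fderiv ℝ (uhat w) x) 1 2
            * matOf (fderiv ℝ (uhat w) x) 2 0
          + matOf (fderiv ℝ (uhat w) x) 0 2 * matOf (fderiv ℝ (uhat w) x) 1 0
            * matOf (fderiv ℝ (uhat w) x) 2 1
          - matOf (fderiv ℝ (uhat w) x) 0 2 * matOf (fderiv ℝ (uhat w) x) 1 1
            * matOf (fderiv ℝ (uhat w) x) 2 0 := by
    funext x
    rw [Matrix.det_fin_three]
  rw [this]
  have e := contOn_entry hwsm hw0
  exact ((((((e 0 0).mul (e 1 1)).mul (e 2 2)).sub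
    (((e 0 0).mul (e 1 2)).mul (e 2 1))).sub
    (((e 0 1).mul (e 1 0)).mul (e 2 2))).add
    (((e 0 1).mul (e 1 2)).mul (e 2 0))).add
    ((((e 0 2).mul (e 1 0)).mul (e 2 1))) |>.sub
    (((e 0 2).mul (e 1 1)).mul (e 2 0))

theorem shell_vol_pos : 0 < volume shell := by
  have hO : IsOpen {x : E3 | 1 < ‖x‖ ∧ ‖x‖ < 2} :=
    (isOpen_lt continuous_const continuous_norm).inter
      (isOpen_lt continuous_norm continuous_const)
  have hne : {x : E3 | 1 < ‖x‖ ∧ ‖x‖ < 2}.Nonempty := by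
    refine ⟨(3/2 : ℝ) • EuclideanSpace.single 0 (1:ℝ), ?_⟩
    constructor <;>
    · rw [norm_smul, Real.norm_eq_abs, EuclideanSpace.norm_single,
        abs_of_pos (by norm_num : (0:ℝ) < 3/2)]
      norm_num
  have hsub : {x : E3 | 1 < ‖x‖ ∧ ‖x‖ < 2} ⊆ shell :=
    fun x hx => ⟨le_of_lt hx.1, le_of_lt hx.2⟩
  exact lt_of_lt_of_le (hO.measure_pos volume hne) (measure_mono hsub)

theorem shell_vol_lt_top : volume shell < ⊤ := isCompact_shell.measure_lt_top

/-- The key volume identity. -/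
theorem vol_identity (hwsm : ContDiff ℝ ⊤ w) (hw0 : ∀ y : E3, ‖y‖ = 1 → w y ≠ 0)
    (htan : ∀ y : E3, ‖y‖ = 1 → ⟪w y, y⟫ = 0) {M L t : ℝ} (hM0 : 0 ≤ M)
    (hM : ∀ x ∈ shell, ‖fderiv ℝ (uhat w) x‖ ≤ M)
    (hL : ∀ y z : E3, ‖y‖ = 1 → ‖z‖ = 1 →
      ‖(‖w y‖⁻¹ • w y) - (‖w z‖⁻¹ • w z)‖ ≤ L * ‖y - z‖)
    (ht0 : 0 ≤ t) (htM : t * M < 1) (htL : t * L < 1) :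
    ∫ x in shell, (1 + t * q1 (matOf (fderiv ℝ (uhat w) x))
        + t^2 * q2 (matOf (fderiv ℝ (uhat w) x))
        + t^3 * (matOf (fderiv ℝ (uhat w) x)).det)
      = Real.sqrt (1 + t^2)^3 * (volume shell).toReal := by
  set A : E3 → (E3 →L[ℝ] E3) := fun x => fderiv ℝ (uhat w) x with hA
  set F' : E3 → (E3 →L[ℝ] E3) := fun x => (1 : E3 →L[ℝ] E3) + t • A x with hF'
  set f : E3 → E3 := fun x => x + t • uhat w x with hf
  set g : E3 → ℝ := fun x => 1 + t * q1 (matOf (A x)) + t^2 * q2 (matOf (A x))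
    + t^3 * (matOf (A x)).det with hg
  have hder : ∀ x ∈ shell, HasFDerivWithinAt f (F' x) shell x := fun x hx =>
    ((hasStrict_ft hwsm hw0 (shell_ne_zero hx) t).hasFDerivAt).hasFDerivWithinAt
  have hinj : Set.InjOn f shell := injOn_ft hw0 htan hL ht0 htL
  have hcov : (∫⁻ x in shell, ENNReal.ofReal |(F' x).det| ∂volume) = volume (f '' shell) :=
    lintegral_abs_det_fderiv_eq_addHaar_image volume measurableSet_shell hder hinj
  have hpos : ∀ x ∈ shell, 0 < (F' x).det := by
    intro x hx
    apply det_pos_of_ne_zero ht0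
    intro s hs
    apply det_ne_zero_of_small
    have hns : ‖s • A x‖ = |s| * ‖A x‖ := norm_smul s (A x)
    rw [hns, abs_of_nonneg hs.1]
    calc s * ‖A x‖ ≤ t * M := by
          have h1 := hM x hx
          have h2 := hs.2
          nlinarith [norm_nonneg (A x)]
      _ < 1 := htM
  have hgeq : ∀ x ∈ shell, (F' x).det = g x := by
    intro x hx
    rw [hF', hg]
    simp only
    rw [clm_det_eq, det_one_add_smul3]
  have hgcont : ContinuousOn g shell := by
    rw [hg]
    apply ContinuousOn.add
    apply ContinuousOn.add
    apply ContinuousOn.add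
    · exact continuousOn_const
    · exact (contOn_q1 hwsm hw0).const_smul t
    · exact (contOn_q2 hwsm hw0).const_smul (t^2)
    · exact (contOn_q3 hwsm hw0).const_smul (t^3)
  have hgint : IntegrableOn g shell volume := hgcont.integrableOn_compact isCompact_shell
  have hgnn : 0 ≤ᵐ[volume.restrict shell] g := by
    rw [Filter.EventuallyLE, ae_restrict_iff' measurableSet_shell]
    exact Filter.Eventually.of_forall fun x hx => le_of_lt (hgeq x hx ▸ hpos x hx)
  have step1 : (∫⁻ x in shell, ENNReal.ofReal |(F' x).det| ∂volume)
      = ∫⁻ x in shell, ENNReal.ofReal (g x) ∂volume := by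
    apply setLIntegral_congr_fun measurableSet_shell
    exact fun x hx => by
      rw [abs_of_pos (hpos x hx), hgeq x hx]
  have step2 : (∫⁻ x in shell, ENNReal.ofReal (g x) ∂volume)
      = ENNReal.ofReal (∫ x in shell, g x) :=
    (ofReal_integral_eq_lintegral_ofReal hgint hgnn).symm
  have himg : volume (f '' shell)
      = ENNReal.ofReal (Real.sqrt (1 + t^2)^3) * volume shell := by
    rw [hf, image_ft_shell hwsm hw0 htan hM ht0 htM,
      Measure.addHaar_smul_of_nonneg volume (Real.sqrt_nonneg _) shell,
      finrank_euclideanSpace_fin]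
  have hfin : ENNReal.ofReal (∫ x in shell, g x)
      = ENNReal.ofReal (Real.sqrt (1 + t^2)^3 * (volume shell).toReal) := by
    rw [← step2, ← step1, hcov, himg, ENNReal.ofReal_mul (by positivity),
      ENNReal.ofReal_toReal (ne_of_lt shell_vol_lt_top)]
  have hnn1 : 0 ≤ ∫ x in shell, g x :=
    setIntegral_nonneg measurableSet_shell fun x hx => le_of_lt (hgeq x hx ▸ hpos x hx)
  have := (ENNReal.ofReal_eq_ofReal_iff hnn1 (by positivity)).mp hfin
  exact this

end Vol

section Poly
open Polynomial

theorem no_poly {a₀ a₁ a₂ a₃ c T : ℝ} (hc : 0 < c) (hT : 0 < T)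
    (h : ∀ t ∈ Ioc (0:ℝ) T, a₀ + a₁*t + a₂*t^2 + a₃*t^3 = Real.sqrt (1+t^2)^3 * c) :
    False := by
  set P : ℝ[X] := C a₀ + C a₁ * X + C a₂ * X^2 + C a₃ * X^3 with hP
  set Q : ℝ[X] := C (c^2) * (1 + X^2)^3 with hQ
  have key : P^2 = Q := by
    apply Polynomial.eq_of_infinite_eval_eq
    apply Set.Infinite.mono (s := Ioc (0:ℝ) T) ?_ (Set.Ioc_infinite hT)
    intro t ht
    simp only [Set.mem_setOf_eq, hP, hQ, eval_add, eval_mul, eval_pow, eval_C, eval_X,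
      eval_one]
    have h1 := h t ht
    have hsq : Real.sqrt (1+t^2)^2 = 1 + t^2 := Real.sq_sqrt (by positivity)
    calc (a₀ + a₁*t + a₂*t^2 + a₃*t^3)^2 = (Real.sqrt (1+t^2)^3 * c)^2 := by rw [h1]
      _ = (Real.sqrt (1+t^2)^2)^3 * c^2 := by ring
      _ = c^2 * (1+t^2)^3 := by rw [hsq]; ring
  have hPne : P ≠ 0 := by
    intro h0
    have := congrArg (Polynomial.eval 0) key
    rw [h0] at this
    simp [hQ] at this
    nlinarith
  set Pc : ℂ[X] := P.map (algebraMap ℝ ℂ) with hPc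
  have hPcne : Pc ≠ 0 := Polynomial.map_ne_zero hPne
  have hCfac : (1 + X^2 : ℂ[X]) = (X - C Complex.I) * (X + C Complex.I) := by
    have hI : (C Complex.I : ℂ[X])^2 = C (-1) := by
      rw [← C_pow, Complex.I_sq]
    have : (X - C Complex.I) * (X + C Complex.I) = X^2 - (C Complex.I)^2 := by ring
    rw [this, hI]
    simp
    ring
  have keyC : Pc^2 = C ((c:ℂ)^2) * ((X - C Complex.I)^3 * (X + C Complex.I)^3) := by
    have := congrArg (Polynomial.map (algebraMap ℝ ℂ)) key
    rw [Polynomial.map_pow] at this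
    rw [hPc, this, hQ]
    rw [Polynomial.map_mul, Polynomial.map_pow, Polynomial.map_add, Polynomial.map_one,
      Polynomial.map_pow, Polynomial.map_X, map_C]
    rw [hCfac]
    simp only [Complex.coe_algebraMap]
    push_cast
    ring
  -- root multiplicities at I
  have hXsub : (X - C Complex.I : ℂ[X]) ≠ 0 := X_sub_C_ne_zero _
  have hXadd : (X + C Complex.I : ℂ[X]) ≠ 0 := by
    intro h0
    have := congrArg (Polynomial.eval Complex.I) h0
    rw [eval_add, eval_X, eval_C, eval_zero] at this
    have h2 : (2:ℂ) * Complex.I = 0 := by rw [two_mul]; exact this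
    rcases mul_eq_zero.mp h2 with h|h
    · norm_num at h
    · exact Complex.I_ne_zero h
  have hCc : (C ((c:ℂ)^2) : ℂ[X]) ≠ 0 := by
    simp only [ne_eq, C_eq_zero]
    push_cast
    intro h0
    have : (c:ℂ) = 0 := by
      have := pow_eq_zero_iff (n := 2) (by norm_num) |>.mp h0
      exact this
    rw [Complex.ofReal_eq_zero] at this
    exact (ne_of_gt hc) this
  have hprod : (C ((c:ℂ)^2) * ((X - C Complex.I)^3 * (X + C Complex.I)^3) : ℂ[X]) ≠ 0 :=
    mul_ne_zero hCc (mul_ne_zero (pow_ne_zero _ hXsub) (pow_ne_zero _ hXadd))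
  have hL : rootMultiplicity Complex.I (Pc^2) = 2 * rootMultiplicity Complex.I Pc := by
    rw [show Pc^2 = Pc * Pc by ring, rootMultiplicity_mul (mul_ne_zero hPcne hPcne)]
    ring
  have hR : rootMultiplicity Complex.I
      (C ((c:ℂ)^2) * ((X - C Complex.I)^3 * (X + C Complex.I)^3)) = 3 := by
    rw [rootMultiplicity_mul hprod,
      rootMultiplicity_mul (mul_ne_zero (pow_ne_zero _ hXsub) (pow_ne_zero _ hXadd)),
      rootMultiplicity_X_sub_C_pow, rootMultiplicity_eq_zero, rootMultiplicity_eq_zero]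
    · intro hroot
      rw [IsRoot, eval_pow, eval_add, eval_X, eval_C] at hroot
      have : (Complex.I + Complex.I) ≠ 0 := by
        intro h0
        apply Complex.I_ne_zero
        have : (2:ℂ) * Complex.I = 0 := by rw [two_mul]; exact h0
        rcases mul_eq_zero.mp this with h|h
        · norm_num at h
        · exact h
      exact this (pow_eq_zero_iff (n := 3) (by norm_num) |>.mp hroot)
    · intro hroot
      rw [IsRoot, eval_C] at hroot
      exact hCc (by rw [C_eq_zero]; exact hroot)
  rw [keyC, hR] at hL
  omega

end Poly

open MeasureTheory in
/-- **The Hairy Ball Theorem.** Every continuous tangent vector field on the unit sphere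
`S² ⊂ ℝ³` has a zero: if `v` assigns continuously to each `x ∈ S²` a vector `v x ∈ ℝ³` with
`⟪v x, x⟫ = 0`, then `v` vanishes somewhere. -/
theorem hairy_ball
    (v : Metric.sphere (0 : EuclideanSpace ℝ (Fin 3)) 1 → EuclideanSpace ℝ (Fin 3))
    (hv : Continuous v)
    (htang : ∀ x, inner (𝕜 := ℝ) (v x) (x : EuclideanSpace ℝ (Fin 3)) = 0) :
    ∃ x, v x = 0 := by
  by_contra hcon
  push_neg at hcon
  -- minimum of the field
  have hne : (univ : Set (sphere (0:E3) 1)).Nonempty :=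
    ⟨⟨EuclideanSpace.single 0 1, by
      rw [mem_sphere_zero_iff_norm, EuclideanSpace.norm_single, norm_one]⟩, mem_univ _⟩
  obtain ⟨x₀, -, hmin⟩ := isCompact_univ.exists_isMinOn hne hv.norm.continuousOn
  set m := ‖v x₀‖ with hm
  have hm0 : 0 < m := norm_pos_iff.mpr (hcon x₀)
  have hminall : ∀ x : sphere (0:E3) 1, m ≤ ‖v x‖ := fun x => hmin (mem_univ x)
  -- smooth approximation
  obtain ⟨g, hgsm, hgapp⟩ := exists_smooth_approx v hv (show (0:ℝ) < m/8 by positivity)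
  -- tangential projection
  set w : E3 → E3 := fun x => g x - (⟪g x, x⟫) • x with hw
  have hwsm : ContDiff ℝ ⊤ w := by
    apply hgsm.sub
    exact (hgsm.inner ℝ contDiff_id).smul contDiff_id
  have htanw : ∀ y : E3, ‖y‖ = 1 → ⟪w y, y⟫ = 0 := by
    intro y hy
    rw [hw]
    simp only
    rw [inner_sub_left, real_inner_smul_left, real_inner_self_eq_norm_sq, hy]
    ring
  have happrox : ∀ y : sphere (0:E3) 1, ‖w y - v y‖ ≤ m/4 := by
    intro y
    have hy1 : ‖(y : E3)‖ = 1 := mem_sphere_zero_iff_norm.mp y.2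
    have hsplit : w y - v y = (g y - v y) - (⟪g y - v y, (y:E3)⟫) • (y:E3) := by
      rw [hw]
      simp only
      rw [inner_sub_left, htang y, sub_zero]
      abel
    rw [hsplit]
    have h1 : ‖g y - v y‖ < m/8 := hgapp y
    have h2 : |⟪g y - v y, (y:E3)⟫| ≤ ‖g y - v y‖ * ‖(y:E3)‖ := abs_real_inner_le_norm _ _
    calc ‖(g y - v y) - (⟪g y - v y, (y:E3)⟫) • (y:E3)‖
        ≤ ‖g y - v y‖ + ‖(⟪g y - v y, (y:E3)⟫) • (y:E3)‖ := norm_sub_le _ _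
      _ = ‖g y - v y‖ + |⟪g y - v y, (y:E3)⟫| * ‖(y:E3)‖ := by rw [norm_smul, Real.norm_eq_abs]
      _ = ‖g y - v y‖ + |⟪g y - v y, (y:E3)⟫| := by rw [hy1, mul_one]
      _ ≤ ‖g y - v y‖ + ‖g y - v y‖ := by
          have h2' : |⟪g y - v y, (y:E3)⟫| ≤ ‖g y - v y‖ := by
            calc |⟪g y - v y, (y:E3)⟫| ≤ ‖g y - v y‖ * ‖(y:E3)‖ := h2
              _ = ‖g y - v y‖ := by rw [hy1, mul_one]
          linarith
      _ = 2 * ‖g y - v y‖ := by ring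
      _ ≤ m/4 := by linarith
  have hwδ : ∀ y : E3, ‖y‖ = 1 → m/2 ≤ ‖w y‖ := by
    intro y hy
    set ys : sphere (0:E3) 1 := ⟨y, mem_sphere_zero_iff_norm.mpr hy⟩ with hys
    have h1 : m ≤ ‖v ys‖ := hminall ys
    have h2 : ‖w y - v ys‖ ≤ m/4 := happrox ys
    have h3 : ‖v ys‖ - ‖w y - v ys‖ ≤ ‖w y‖ := by
      have := norm_sub_norm_le (w y) (v ys)  -- ‖w y‖ - ‖v ys‖ ≤ ...? need other direction
      have h4 : ‖v ys‖ ≤ ‖w y - v ys‖ + ‖w y‖ := by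
        calc ‖v ys‖ = ‖(v ys - w y) + w y‖ := by rw [sub_add_cancel]
          _ ≤ ‖v ys - w y‖ + ‖w y‖ := norm_add_le _ _
          _ = ‖w y - v ys‖ + ‖w y‖ := by rw [norm_sub_rev]
      linarith
    linarith
  have hw0 : ∀ y : E3, ‖y‖ = 1 → w y ≠ 0 := by
    intro y hy h0
    have := hwδ y hy
    rw [h0, norm_zero] at this
    linarith
  -- constants
  obtain ⟨L, hL0, hL⟩ := exists_lip hwsm (show (0:ℝ) < m/2 by positivity) hwδ
  obtain ⟨M, hM0, hM⟩ := exists_fderiv_bound hwsm hw0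
  set T : ℝ := min (1/(2*(L+1))) (1/(2*(M+1))) with hT
  have hT0 : 0 < T := lt_min (by positivity) (by positivity)
  -- coefficients
  set a₀ : ℝ := (volume shell).toReal with ha₀
  set a₁ : ℝ := ∫ x in shell, q1 (matOf (fderiv ℝ (uhat w) x)) with ha₁
  set a₂ : ℝ := ∫ x in shell, q2 (matOf (fderiv ℝ (uhat w) x)) with ha₂
  set a₃ : ℝ := ∫ x in shell, (matOf (fderiv ℝ (uhat w) x)).det with ha₃
  have ha₀pos : 0 < a₀ :=
    ENNReal.toReal_pos (ne_of_gt shell_vol_pos) (ne_of_lt shell_vol_lt_top)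
  have hint1 : IntegrableOn (fun x => q1 (matOf (fderiv ℝ (uhat w) x))) shell volume :=
    (contOn_q1 hwsm hw0).integrableOn_compact isCompact_shell
  have hint2 : IntegrableOn (fun x => q2 (matOf (fderiv ℝ (uhat w) x))) shell volume :=
    (contOn_q2 hwsm hw0).integrableOn_compact isCompact_shell
  have hint3 : IntegrableOn (fun x => (matOf (fderiv ℝ (uhat w) x)).det) shell volume :=
    (contOn_q3 hwsm hw0).integrableOn_compact isCompact_shell
  apply no_poly ha₀pos hT0
  intro t ht
  have ht0 : 0 ≤ t := le_of_lt ht.1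
  have htL : t * L < 1 := by
    have h1 : t ≤ 1/(2*(L+1)) := le_trans ht.2 (min_le_left _ _)
    have h2 : 0 < 2*(L+1) := by positivity
    calc t * L ≤ (1/(2*(L+1))) * L := by gcongr
      _ < 1 := by
          rw [div_mul_eq_mul_div, one_mul, div_lt_one h2]
          linarith
  have htM : t * M < 1 := by
    have h1 : t ≤ 1/(2*(M+1)) := le_trans ht.2 (min_le_right _ _)
    have h2 : 0 < 2*(M+1) := by positivity
    calc t * M ≤ (1/(2*(M+1))) * M := by gcongr
      _ < 1 := by
          rw [div_mul_eq_mul_div, one_mul, div_lt_one h2]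
          linarith
  have hvol := vol_identity hwsm hw0 htanw hM0 hM hL ht0 htM htL
  -- split the integral
  have hsplit : (∫ x in shell, (1 + t * q1 (matOf (fderiv ℝ (uhat w) x))
        + t^2 * q2 (matOf (fderiv ℝ (uhat w) x))
        + t^3 * (matOf (fderiv ℝ (uhat w) x)).det))
      = a₀ + a₁ * t + a₂ * t^2 + a₃ * t^3 := by
    have hconst : Integrable (fun _ : E3 => (1:ℝ)) (volume.restrict shell) :=
      integrableOn_const (ne_of_lt shell_vol_lt_top)
    have hA : Integrable (fun x => t * q1 (matOf (fderiv ℝ (uhat w) x)))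
        (volume.restrict shell) := hint1.const_mul t
    have hB : Integrable (fun x => t^2 * q2 (matOf (fderiv ℝ (uhat w) x)))
        (volume.restrict shell) := hint2.const_mul _
    have hC : Integrable (fun x => t^3 * (matOf (fderiv ℝ (uhat w) x)).det)
        (volume.restrict shell) := hint3.const_mul _
    have h1A : Integrable (fun x => 1 + t * q1 (matOf (fderiv ℝ (uhat w) x)))
        (volume.restrict shell) := hconst.add hA
    have h1AB : Integrable (fun x => 1 + t * q1 (matOf (fderiv ℝ (uhat w) x))
        + t^2 * q2 (matOf (fderiv ℝ (uhat w) x))) (volume.restrict shell) := h1A.add hB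
    rw [integral_add h1AB hC, integral_add h1A hB, integral_add hconst hA,
      integral_const_mul, integral_const_mul, integral_const_mul, setIntegral_const]
    rw [← ha₁, ← ha₂, ← ha₃]
    simp only [smul_eq_mul, mul_one]
    rw [measureReal_def, ← ha₀]
    ring
  rw [hsplit] at hvol
  exact hvol

end HairyBallProof
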